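/- A countable collection C of infinite languages over U can be uniformly generated with feedback if and only if its GF dimension is finite. -/
import Mathlib


/-! STATEMENT 16: A countable collection C of infinite languages over U can be uniformly generated with feedback iff its GF dimension is finite. -/

/-- A generator strategy in the feedback model: `query h x` is the membership query
`y_t` issued after receiving input `x_t` with history `h` of completed rounds, and
`out h x y a` is the output `z_t` after the answer `a_t` to the query. -/
structure FGen (U : Type) where
  query : List (U × U × Bool × U) → U → U
  out : List (U × U × Bool × U) → U → U → Bool → U

/-- An adversary strategy in the feedback model: `inp h` is the next input `x_t`,
and `ans h x y` is the yes/no answer `a_t` to the generator's query `y_t`. -/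
structure FAdv (U : Type) where
  inp : List (U × U × Bool × U) → U
  ans : List (U × U × Bool × U) → U → U → Bool

/-- The history of the first `t` completed rounds `(x_s, y_s, a_s, z_s)` of the
interaction between `Adv` and `Gen`. -/
def fRun {U : Type} (Adv : FAdv U) (Gen : FGen U) : ℕ → List (U × U × Bool × U)
  | 0 => []
  | t + 1 =>
      let h := fRun Adv Gen t
      let x := Adv.inp h
      let y := Gen.query h x
      let a := Adv.ans h x y
      h ++ [(x, y, a, Gen.out h x y a)]

/-- The input `x_t` of round `t` (0-indexed) of the transcript T(Adv, Gen). -/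
def fX {U : Type} (Adv : FAdv U) (Gen : FGen U) (t : ℕ) : U :=
  Adv.inp (fRun Adv Gen t)

/-- The generator's query `y_t` of round `t`. -/
def fY {U : Type} (Adv : FAdv U) (Gen : FGen U) (t : ℕ) : U :=
  Gen.query (fRun Adv Gen t) (fX Adv Gen t)

/-- The adversary's answer `a_t` of round `t`. -/
def fA {U : Type} (Adv : FAdv U) (Gen : FGen U) (t : ℕ) : Bool :=
  Adv.ans (fRun Adv Gen t) (fX Adv Gen t) (fY Adv Gen t)

/-- The generator's output `z_t` of round `t`. -/
def fZ {U : Type} (Adv : FAdv U) (Gen : FGen U) (t : ℕ) : U :=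
  Gen.out (fRun Adv Gen t) (fX Adv Gen t) (fY Adv Gen t) (fA Adv Gen t)

/-- `S_r`: the set of distinct inputs among the first `r` rounds. -/
def fS {U : Type} (Adv : FAdv U) (Gen : FGen U) (r : ℕ) : Set U :=
  fX Adv Gen '' {t | t < r}

/-- The adversary strategy `Adv` is consistent with the language `K` (against `Gen`):
the inputs form an enumeration of `K` and every answer is truthful for `K`. -/
def fConsistent {U : Type} (Adv : FAdv U) (Gen : FGen U) (K : Set U) : Prop :=
  (∀ t, fX Adv Gen t ∈ K) ∧ (∀ w ∈ K, ∃ t, fX Adv Gen t = w) ∧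
    ∀ t, fA Adv Gen t = true ↔ fY Adv Gen t ∈ K

/-- `C_r(T)`: the languages of `C` consistent with the transcript up to round `r`
(inputs belong to the language and all answers are truthful for it). -/
def fCons {U : Type} (C : Set (Set U)) (Adv : FAdv U) (Gen : FGen U) (r : ℕ) :
    Set (Set U) :=
  {Lang ∈ C | ∀ t < r, fX Adv Gen t ∈ Lang ∧ (fA Adv Gen t = true ↔ fY Adv Gen t ∈ Lang)}

/-- The effective intersection `E_r(T)`. -/
def fE {U : Type} (C : Set (Set U)) (Adv : FAdv U) (Gen : FGen U) (r : ℕ) : Set U :=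
  ⋂₀ fCons C Adv Gen r \ fS Adv Gen r

/-- The GF dimension of `C`: the supremum of all `d ∈ ℕ` such that for every
generator strategy there are `K ∈ C` and an adversary strategy consistent with `K`
whose transcript has a finite round `r ≥ d` with `|S_r| ≥ d` and `E_r(T) = ∅`. -/
noncomputable def gfDim {U : Type} (C : Set (Set U)) : ℕ∞ :=
  sSup {e : ℕ∞ | ∃ d : ℕ, e = (d : ℕ∞) ∧
    ∀ Gen : FGen U, ∃ K ∈ C, ∃ Adv : FAdv U,
      fConsistent Adv Gen K ∧
      ∃ r : ℕ, d ≤ r ∧ d ≤ (fS Adv Gen r).ncard ∧ fE C Adv Gen r = ∅}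

/-- `C` can be uniformly generated with feedback: some generator strategy `Gen` and
bound `t*` are such that against every adversary consistent with any `K ∈ C`, the
output of every round `t` with `|S_t| ≥ t*` lies in `K \ S_t` (here `S_t` counts the
inputs up to and including round `t`). -/
def UniformGenWithFeedback {U : Type} (C : Set (Set U)) : Prop :=
  ∃ Gen : FGen U, ∃ tstar : ℕ,
    ∀ K ∈ C, ∀ Adv : FAdv U, fConsistent Adv Gen K →
      ∀ t : ℕ, tstar ≤ (fS Adv Gen (t + 1)).ncard →
        fZ Adv Gen t ∈ K \ fS Adv Gen (t + 1)

namespace GFx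

variable {U : Type}

lemma fRun_succ (A : FAdv U) (G : FGen U) (t : ℕ) :
    fRun A G (t+1) = fRun A G t ++ [(fX A G t, fY A G t, fA A G t, fZ A G t)] := rfl

lemma fRun_length (A : FAdv U) (G : FGen U) : ∀ t, (fRun A G t).length = t
  | 0 => rfl
  | t+1 => by rw [fRun_succ]; simp [fRun_length A G t]

/-- projection of a history to its (x, y, a) data -/
def core (h : List (U × U × Bool × U)) : List (U × U × Bool) :=
  h.map fun q => (q.1, q.2.1, q.2.2.1)

lemma core_append (h : List (U × U × Bool × U)) (q : U × U × Bool × U) :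
    core (h ++ [q]) = core h ++ [(q.1, q.2.1, q.2.2.1)] := by
  simp [core]

lemma core_run_succ (A : FAdv U) (G : FGen U) (t : ℕ) :
    core (fRun A G (t+1)) = core (fRun A G t) ++ [(fX A G t, fY A G t, fA A G t)] := by
  rw [fRun_succ, core_append]

lemma core_run_eq_map (A : FAdv U) (G : FGen U) : ∀ r,
    core (fRun A G r) = (List.range r).map (fun t => (fX A G t, fY A G t, fA A G t))
  | 0 => rfl
  | r+1 => by rw [core_run_succ, core_run_eq_map A G r, List.range_succ]; simp

lemma mem_core_run (A : FAdv U) (G : FGen U) (r : ℕ) (p : U × U × Bool) :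
    p ∈ core (fRun A G r) ↔ ∃ t < r, (fX A G t, fY A G t, fA A G t) = p := by
  rw [core_run_eq_map]; simp [List.mem_map]

/-- rebuild a full history from (x,y,a) data using generator g's outputs -/
def rebuild (g : FGen U) (c : List (U × U × Bool)) : List (U × U × Bool × U) :=
  c.foldl (fun h p => h ++ [(p.1, p.2.1, p.2.2, g.out h p.1 p.2.1 p.2.2)]) []

lemma rebuild_append (g : FGen U) (c : List (U × U × Bool)) (p : U × U × Bool) :
    rebuild g (c ++ [p]) =
      rebuild g c ++ [(p.1, p.2.1, p.2.2, g.out (rebuild g c) p.1 p.2.1 p.2.2)] := by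
  simp [rebuild, List.foldl_append]

lemma rebuild_core (A : FAdv U) (g : FGen U) : ∀ t, rebuild g (core (fRun A g t)) = fRun A g t
  | 0 => rfl
  | t+1 => by
      rw [core_run_succ, rebuild_append, rebuild_core A g t, fRun_succ]
      rfl

/-- effective intersection computed from (x,y,a) data -/
def EC (C : Set (Set U)) (c : List (U × U × Bool)) : Set U :=
  ⋂₀ {L | L ∈ C ∧ ∀ p ∈ c, p.1 ∈ L ∧ (p.2.2 = true ↔ p.2.1 ∈ L)} \ {u | ∃ p ∈ c, p.1 = u}

lemma EC_core_run (C : Set (Set U)) (A : FAdv U) (G : FGen U) (r : ℕ) :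
    EC C (core (fRun A G r)) = fE C A G r := by
  have h1 : {L | L ∈ C ∧ ∀ p ∈ core (fRun A G r), p.1 ∈ L ∧ (p.2.2 = true ↔ p.2.1 ∈ L)}
      = fCons C A G r := by
    ext L
    simp only [fCons, Set.mem_setOf_eq, mem_core_run, Set.sep_setOf]
    constructor
    · rintro ⟨hL, hall⟩
      exact ⟨hL, fun t ht => hall _ ⟨t, ht, rfl⟩⟩
    · rintro ⟨hL, hall⟩
      refine ⟨hL, ?_⟩
      rintro p ⟨t, ht, rfl⟩
      exact hall t ht
  have h2 : {u | ∃ p ∈ core (fRun A G r), p.1 = u} = fS A G r := by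
    ext u
    simp only [Set.mem_setOf_eq, mem_core_run, fS, Set.mem_image, Set.mem_setOf_eq]
    constructor
    · rintro ⟨p, ⟨t, ht, rfl⟩, rfl⟩
      exact ⟨t, ht, rfl⟩
    · rintro ⟨t, ht, rfl⟩
      exact ⟨_, ⟨t, ht, rfl⟩, rfl⟩
  rw [fE, ← h1, ← h2]; rfl

lemma ncard_fS_le (A : FAdv U) (G : FGen U) (r : ℕ) : (fS A G r).ncard ≤ r := by
  have : {t : ℕ | t < r} = Set.Iio r := rfl
  calc (fS A G r).ncard ≤ ({t : ℕ | t < r}).ncard :=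
        Set.ncard_image_le (by rw [this]; exact Set.finite_Iio r)
    _ = r := by rw [this, ← Nat.card_coe_set_eq, Nat.card_eq_fintype_card]; simp

end GFx
namespace GFx
variable {U : Type}

lemma mem_fCons_iff (C : Set (Set U)) (A : FAdv U) (G : FGen U) (r : ℕ) (L : Set U) :
    L ∈ fCons C A G r ↔ L ∈ C ∧ ∀ t < r, fX A G t ∈ L ∧ (fA A G t = true ↔ fY A G t ∈ L) :=
  Iff.rfl

lemma forward_bound [Countable U] (C : Set (Set U)) (hInf : ∀ L ∈ C, L.Infinite)
    (Gen : FGen U) (tstar : ℕ)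
    (hGen : ∀ K ∈ C, ∀ Adv : FAdv U, fConsistent Adv Gen K →
      ∀ t : ℕ, tstar ≤ (fS Adv Gen (t + 1)).ncard →
        fZ Adv Gen t ∈ K \ fS Adv Gen (t + 1))
    (d : ℕ)
    (hP : ∃ K ∈ C, ∃ Adv : FAdv U, fConsistent Adv Gen K ∧
      ∃ r : ℕ, d ≤ r ∧ d ≤ (fS Adv Gen r).ncard ∧ fE C Adv Gen r = ∅) :
    d ≤ tstar := by
  classical
  by_contra hlt
  push_neg at hlt
  obtain ⟨K, hK, Adv, hCons, r, hdr, hdS, hE⟩ := hP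
  have hr1 : 1 ≤ r := le_trans (by omega) hdr
  have hr' : r - 1 + 1 = r := Nat.succ_pred_eq_of_pos hr1
  have main : ∀ L ∈ fCons C Adv Gen r, fZ Adv Gen (r-1) ∈ L \ fS Adv Gen r := by
    intro L hLmem
    rw [mem_fCons_iff] at hLmem
    obtain ⟨hLC, hLcons⟩ := hLmem
    have hLinf := hInf L hLC
    obtain ⟨e, he⟩ := (Set.to_countable L).exists_eq_range hLinf.nonempty
    let AdvL : FAdv U := ⟨fun h => if h.length < r then Adv.inp h else e (h.length - r),
      fun h x y => if h.length < r then Adv.ans h x y else decide (y ∈ L)⟩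
    have hinp : ∀ h, AdvL.inp h = if h.length < r then Adv.inp h else e (h.length - r) :=
      fun _ => rfl
    have hans : ∀ h x y, AdvL.ans h x y =
        if h.length < r then Adv.ans h x y else decide (y ∈ L) := fun _ _ _ => rfl
    have hrun : ∀ t, t ≤ r → fRun AdvL Gen t = fRun Adv Gen t := by
      intro t
      induction t with
      | zero => intro _; rfl
      | succ t ih =>
        intro ht
        have ht' : t < r := ht
        have iht := ih ht'.le
        have hx : fX AdvL Gen t = fX Adv Gen t := by
          unfold fX; rw [iht, hinp, fRun_length, if_pos ht']
        have hy : fY AdvL Gen t = fY Adv Gen t := by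
          unfold fY; rw [iht, hx]
        have ha : fA AdvL Gen t = fA Adv Gen t := by
          unfold fA; rw [iht, hx, hy, hans, fRun_length, if_pos ht']
        have hz : fZ AdvL Gen t = fZ Adv Gen t := by
          unfold fZ; rw [iht, hx, hy, ha]
        rw [fRun_succ, fRun_succ, iht, hx, hy, ha, hz]
    have hxLt : ∀ t, t < r → fX AdvL Gen t = fX Adv Gen t := by
      intro t ht
      unfold fX; rw [hrun t ht.le, hinp, fRun_length, if_pos ht]
    have hyLt : ∀ t, t < r → fY AdvL Gen t = fY Adv Gen t := by
      intro t ht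
      unfold fY; rw [hrun t ht.le, hxLt t ht]
    have haLt : ∀ t, t < r → fA AdvL Gen t = fA Adv Gen t := by
      intro t ht
      unfold fA; rw [hrun t ht.le, hxLt t ht, hyLt t ht, hans, fRun_length, if_pos ht]
    have hzLt : ∀ t, t < r → fZ AdvL Gen t = fZ Adv Gen t := by
      intro t ht
      unfold fZ; rw [hrun t ht.le, hxLt t ht, hyLt t ht, haLt t ht]
    have hfS : fS AdvL Gen r = fS Adv Gen r :=
      Set.image_congr (fun t ht => hxLt t ht)
    have hconsL : fConsistent AdvL Gen L := by
      refine ⟨?_, ?_, ?_⟩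
      · intro t
        by_cases ht : t < r
        · rw [hxLt t ht]; exact (hLcons t ht).1
        · have : fX AdvL Gen t = e (t - r) := by
            unfold fX; rw [hinp, fRun_length, if_neg ht]
          rw [this, he]; exact Set.mem_range_self _
      · intro w hw
        rw [he] at hw
        obtain ⟨n, rfl⟩ := hw
        refine ⟨r + n, ?_⟩
        unfold fX; rw [hinp, fRun_length, if_neg (by omega)]
        congr 1; omega
      · intro t
        by_cases ht : t < r
        · rw [haLt t ht, hyLt t ht]; exact (hLcons t ht).2
        · unfold fA
          rw [hans, fRun_length, if_neg ht]
          exact decide_eq_true_iff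
    have := hGen L hLC AdvL hconsL (r - 1)
    rw [hr', hfS] at this
    have hz := this (le_trans (le_of_lt hlt) hdS)
    rw [hzLt (r-1) (by omega)] at hz
    exact hz
  have hKmem : K ∈ fCons C Adv Gen r := by
    rw [mem_fCons_iff]
    exact ⟨hK, fun t _ => ⟨hCons.1 t, hCons.2.2 t⟩⟩
  have hzE : fZ Adv Gen (r-1) ∈ fE C Adv Gen r := by
    refine ⟨?_, (main K hKmem).2⟩
    intro L hL
    exact (main L hL).1
  rw [hE] at hzE
  exact hzE

end GFx
namespace GFx
variable {U : Type}

open Classical in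
noncomputable def pick [Nonempty U] (C : Set (Set U)) (c : List (U × U × Bool)) : U :=
  if h : (EC C c).Nonempty then h.choose else Classical.arbitrary U

lemma pick_mem [Nonempty U] (C : Set (Set U)) (c : List (U × U × Bool))
    (h : (EC C c).Nonempty) : pick C c ∈ EC C c := by
  classical
  rw [pick, dif_pos h]; exact h.choose_spec

/-- the generator built from a witness generator `Gen₀`: it simulates `Gen₀`'s queries
and outputs an element of the current effective intersection. -/
noncomputable def mkGen [Nonempty U] (C : Set (Set U)) (Gen₀ : FGen U) : FGen U :=
  ⟨fun h x => Gen₀.query (rebuild Gen₀ (core h)) x,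
   fun h x y a => pick C (core h ++ [(x, y, a)])⟩

/-- translate an adversary against `mkGen C Gen₀` into one against `Gen₀`. -/
def mkAdv (Gen : FGen U) (Adv : FAdv U) : FAdv U :=
  ⟨fun h => Adv.inp (rebuild Gen (core h)),
   fun h x y => Adv.ans (rebuild Gen (core h)) x y⟩

lemma backward_gen [Nonempty U] (C : Set (Set U)) (d : ℕ) (Gen₀ : FGen U)
    (h₀ : ∀ K ∈ C, ∀ Adv : FAdv U, fConsistent Adv Gen₀ K →
      ∀ r : ℕ, ¬(d ≤ r ∧ d ≤ (fS Adv Gen₀ r).ncard ∧ fE C Adv Gen₀ r = ∅)) :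
    UniformGenWithFeedback C := by
  classical
  set Gen : FGen U := mkGen C Gen₀ with hGen
  have hq : ∀ h x, Gen.query h x = Gen₀.query (rebuild Gen₀ (core h)) x := fun _ _ => rfl
  have ho : ∀ h x y a, Gen.out h x y a = pick C (core h ++ [(x, y, a)]) := fun _ _ _ _ => rfl
  refine ⟨Gen, d, ?_⟩
  intro K hK Adv hCons t hcard
  set Adv₀ : FAdv U := mkAdv Gen Adv with hAdv₀
  have hinp : ∀ h, Adv₀.inp h = Adv.inp (rebuild Gen (core h)) := fun _ => rfl
  have hans : ∀ h x y, Adv₀.ans h x y = Adv.ans (rebuild Gen (core h)) x y := fun _ _ _ => rfl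
  have key : ∀ s, core (fRun Adv₀ Gen₀ s) = core (fRun Adv Gen s) := by
    intro s
    induction s with
    | zero => rfl
    | succ s ih =>
      have hx : fX Adv₀ Gen₀ s = fX Adv Gen s := by
        unfold fX; rw [hinp, ih, rebuild_core]
      have hy : fY Adv₀ Gen₀ s = fY Adv Gen s := by
        unfold fY; rw [hq, ← ih, rebuild_core, hx]
      have ha : fA Adv₀ Gen₀ s = fA Adv Gen s := by
        unfold fA; rw [hans, ih, rebuild_core, hx, hy]
      rw [core_run_succ, core_run_succ, ih, hx, hy, ha]
  have hx : ∀ s, fX Adv₀ Gen₀ s = fX Adv Gen s := by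
    intro s; unfold fX; rw [hinp, key s, rebuild_core]
  have hy : ∀ s, fY Adv₀ Gen₀ s = fY Adv Gen s := by
    intro s; unfold fY; rw [hq, ← key s, rebuild_core, hx s]
  have ha : ∀ s, fA Adv₀ Gen₀ s = fA Adv Gen s := by
    intro s; unfold fA; rw [hans, key s, rebuild_core, hx s, hy s]
  have hxf : fX Adv₀ Gen₀ = fX Adv Gen := funext hx
  have hyf : fY Adv₀ Gen₀ = fY Adv Gen := funext hy
  have haf : fA Adv₀ Gen₀ = fA Adv Gen := funext ha
  have hfS : ∀ s, fS Adv₀ Gen₀ s = fS Adv Gen s := by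
    intro s; unfold fS; rw [hxf]
  have hfCons : ∀ s, fCons C Adv₀ Gen₀ s = fCons C Adv Gen s := by
    intro s; unfold fCons; rw [hxf, hyf, haf]
  have hfE : ∀ s, fE C Adv₀ Gen₀ s = fE C Adv Gen s := by
    intro s; unfold fE; rw [hfCons, hfS]
  have hcons₀ : fConsistent Adv₀ Gen₀ K := by
    obtain ⟨c1, c2, c3⟩ := hCons
    refine ⟨fun s => ?_, fun w hw => ?_, fun s => ?_⟩
    · rw [hx s]; exact c1 s
    · obtain ⟨s, hs⟩ := c2 w hw; exact ⟨s, by rw [hx s]; exact hs⟩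
    · rw [ha s, hy s]; exact c3 s
  have hne := h₀ K hK Adv₀ hcons₀ (t + 1)
  have h1 : d ≤ t + 1 := le_trans hcard (ncard_fS_le Adv Gen (t + 1))
  have h2 : d ≤ (fS Adv₀ Gen₀ (t + 1)).ncard := by rw [hfS]; exact hcard
  have h3 : fE C Adv₀ Gen₀ (t + 1) ≠ ∅ := fun h => hne ⟨h1, h2, h⟩
  rw [hfE] at h3
  have hNE : (fE C Adv Gen (t + 1)).Nonempty := Set.nonempty_iff_ne_empty.mpr h3
  have hzfE : fZ Adv Gen t ∈ fE C Adv Gen (t + 1) := by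
    have hzeq : fZ Adv Gen t = pick C (core (fRun Adv Gen (t + 1))) := by
      unfold fZ; rw [ho, ← core_run_succ]
    rw [hzeq]
    have hmem := pick_mem C (core (fRun Adv Gen (t + 1)))
      (by rw [EC_core_run]; exact hNE)
    rw [EC_core_run] at hmem
    exact hmem
  have hKmem : K ∈ fCons C Adv Gen (t + 1) := by
    rw [mem_fCons_iff]
    exact ⟨hK, fun s _ => ⟨hCons.1 s, hCons.2.2 s⟩⟩
  exact ⟨hzfE.1 K hKmem, hzfE.2⟩

end GFx
theorem uniform_generation_with_feedback_characterization
    (U : Type) [Countable U] [Infinite U]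
    (C : Set (Set U)) (hC : C.Countable) (hInf : ∀ L ∈ C, L.Infinite) :
    UniformGenWithFeedback C ↔ gfDim C ≠ ⊤ := by
  constructor
  · rintro ⟨Gen, tstar, hGen⟩
    have hle : gfDim C ≤ (tstar : ℕ∞) := by
      apply sSup_le
      rintro e ⟨d, rfl, hPd⟩
      exact Nat.cast_le.mpr (GFx.forward_bound C hInf Gen tstar hGen d (hPd Gen))
    intro h
    rw [h] at hle
    exact (lt_irrefl _ (lt_of_le_of_lt hle (WithTop.coe_lt_top tstar))).elim
  · intro htop
    have hd : ∃ d : ℕ, ∃ Gen₀ : FGen U,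
        ∀ K ∈ C, ∀ Adv : FAdv U, fConsistent Adv Gen₀ K →
          ∀ r : ℕ, ¬(d ≤ r ∧ d ≤ (fS Adv Gen₀ r).ncard ∧ fE C Adv Gen₀ r = ∅) := by
      by_contra hcon
      push_neg at hcon
      have hall : ∀ d : ℕ, (d : ℕ∞) ≤ gfDim C := by
        intro d
        apply le_sSup
        exact ⟨d, rfl, hcon d⟩
      obtain ⟨n, hn⟩ := WithTop.ne_top_iff_exists.mp htop
      have := hall (n + 1)
      rw [← hn] at this
      have : n + 1 ≤ n := Nat.cast_le.mp this
      omega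
    obtain ⟨d, Gen₀, h₀⟩ := hd
    exact GFx.backward_gen C d Gen₀ h₀
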